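/- Let k₁, k₂, k₃ : G × G → ℂ be kernels and fix x, w ∈ G such that the function (y,z) ↦ k₁(x,y)·k₂(y,z)·k₃(z,w) is integrable on G × G with respect to μ × μ. Then ((k₁ ⋆ k₂) ⋆ k₃)(x,w) = ∫_G ∫_G φ(x y⁻¹, y z⁻¹, z w⁻¹) · φ(x y⁻¹, y w⁻¹, w) · φ(y z⁻¹, z w⁻¹, w) · k₁(x,y) · k₂(y,z) · k₃(z,w) dμ(y) dμ(z); that is, the triple twisted-kernel product ((k₁ ⋆ k₂) ⋆ k₃)(x,w) equals the associator-corrected product Φ(k₁ ⋆ (k₂ ⋆ k₃))(x,w). -/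

import Mathlib

open MeasureTheory

/-- The twisted product of two kernels:
`(k₁ ⋆ k₂)(x,z) = ∫_G φ(x y⁻¹, y z⁻¹, z) k₁(x,y) k₂(y,z) dμ(y)`. -/
noncomputable def twistedKernelMul {G : Type*} [Group G] [MeasurableSpace G]
    (μ : Measure G) (φ : G → G → G → ℂ) (k₁ k₂ : G → G → ℂ) : G → G → ℂ :=
  fun x z => ∫ y, φ (x * y⁻¹) (y * z⁻¹) z * k₁ x y * k₂ y z ∂μ

/-- Let `G` be a locally compact group with left Haar measure `μ` and let
`φ` be a unit-circle-valued function on `G³` satisfying the pentagonal identity.  If the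
function `(y,z) ↦ k₁(x,y)·k₂(y,z)·k₃(z,w)` is integrable on `G × G`, then the triple twisted
kernel product `((k₁ ⋆ k₂) ⋆ k₃)(x,w)` equals the associator-corrected product
`Φ(k₁ ⋆ (k₂ ⋆ k₃))(x,w)`, i.e.
`∫∫ φ(xy⁻¹,yz⁻¹,zw⁻¹) φ(xy⁻¹,yw⁻¹,w) φ(yz⁻¹,zw⁻¹,w) k₁(x,y) k₂(y,z) k₃(z,w) dμ(y) dμ(z)`. -/
theorem triple_twisted_kernel_product
    {G : Type*} [Group G] [TopologicalSpace G] [IsTopologicalGroup G]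
    [LocallyCompactSpace G] [MeasurableSpace G] [BorelSpace G]
    (μ : Measure G) [μ.IsHaarMeasure]
    (φ : G → G → G → ℂ) (hφ : ∀ x y z, ‖φ x y z‖ = 1)
    (hpent : ∀ x y z w, φ x y z * φ x (y * z) w * φ y z w
      = φ (x * y) z w * φ x y (z * w))
    (k₁ k₂ k₃ : G → G → ℂ) (x w : G)
    (hint : Integrable
      (fun p : G × G => k₁ x p.1 * k₂ p.1 p.2 * k₃ p.2 w) (μ.prod μ)) :
    twistedKernelMul μ φ (twistedKernelMul μ φ k₁ k₂) k₃ x w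
      = ∫ z, ∫ y, φ (x * y⁻¹) (y * z⁻¹) (z * w⁻¹) * φ (x * y⁻¹) (y * w⁻¹) w *
          φ (y * z⁻¹) (z * w⁻¹) w * k₁ x y * k₂ y z * k₃ z w ∂μ ∂μ := by
  simp only [twistedKernelMul]
  refine integral_congr_ae (Filter.Eventually.of_forall fun z => ?_)
  have key : ∀ y : G,
      φ (x * y⁻¹) (y * z⁻¹) (z * w⁻¹) * φ (x * y⁻¹) (y * w⁻¹) w *
        φ (y * z⁻¹) (z * w⁻¹) w
      = φ (x * z⁻¹) (z * w⁻¹) w * φ (x * y⁻¹) (y * z⁻¹) z := by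
    intro y
    have h := hpent (x * y⁻¹) (y * z⁻¹) (z * w⁻¹) w
    have e1 : y * z⁻¹ * (z * w⁻¹) = y * w⁻¹ := by group
    have e2 : x * y⁻¹ * (y * z⁻¹) = x * z⁻¹ := by group
    have e3 : z * w⁻¹ * w = z := by group
    rw [e1, e2, e3] at h
    exact h
  dsimp only
  rw [← integral_const_mul, ← integral_mul_const]
  refine integral_congr_ae (Filter.Eventually.of_forall fun y => ?_)
  have h := key y
  dsimp only
  linear_combination (-(k₁ x y * k₂ y z * k₃ z w)) * h
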